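/- (Partial overdamping of the high-loss spectrum) Assume θ = 0 and rank R < N. If β > 2·ω_max/b_min, then every ζ ∈ σ(A(β)) that lies in one of the high-loss discs — i.e. satisfies |ζ + iβb| ≤ ω_max for some nonzero eigenvalue b of B — is purely imaginary: Re ζ = 0. Equivalently, every ζ ∈ σ(A(β)) with −Im ζ > ω_max satisfies Re ζ = 0. -/

import Mathlib

open Matrix
open scoped ComplexOrder

set_option maxHeartbeats 1000000

noncomputable section

variable {N : ℕ}

/-- A real matrix viewed as a complex matrix. -/
def cm (M : Matrix (Fin N) (Fin N) ℝ) : Matrix (Fin N) (Fin N) ℂ :=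
  M.map Complex.ofReal

/-- The quadratic matrix pencil `C(ζ,β) = ζ²α + iζ(2θ + βR) − η`. -/
def pencil (α η θ R : Matrix (Fin N) (Fin N) ℝ) (β : ℝ) (ζ : ℂ) :
    Matrix (Fin N) (Fin N) ℂ :=
  ζ ^ 2 • cm α + (Complex.I * ζ) • ((2 : ℂ) • cm θ + (β : ℂ) • cm R) - cm η

/-- The former Mathlib `Matrix.PosSemidef.sqrt` (removed), with its old definition. -/
def psdSqrt {M : Matrix (Fin N) (Fin N) ℂ} (hM : M.PosSemidef) : Matrix (Fin N) (Fin N) ℂ :=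
  (hM.1.eigenvectorUnitary : Matrix (Fin N) (Fin N) ℂ) *
    diagonal ((↑) ∘ Real.sqrt ∘ hM.1.eigenvalues) *
    (star hM.1.eigenvectorUnitary : Matrix (Fin N) (Fin N) ℂ)

/-- `K_p = (√α)⁻¹`. -/
def Kp {α : Matrix (Fin N) (Fin N) ℝ} (hα : (cm α).PosDef) : Matrix (Fin N) (Fin N) ℂ :=
  (psdSqrt hα.posSemidef)⁻¹

/-- `Φ = √η · K_p`. -/
def Phi {α η : Matrix (Fin N) (Fin N) ℝ} (hα : (cm α).PosDef) (hη : (cm η).PosSemidef) :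
    Matrix (Fin N) (Fin N) ℂ :=
  psdSqrt hη * Kp hα

/-- `R̃ = K_p R K_p`. -/
def Rt (R : Matrix (Fin N) (Fin N) ℝ) {α : Matrix (Fin N) (Fin N) ℝ} (hα : (cm α).PosDef) :
    Matrix (Fin N) (Fin N) ℂ :=
  Kp hα * cm R * Kp hα

/-- `Ω_p = −2i K_p θ K_p`. -/
def Omp (θ : Matrix (Fin N) (Fin N) ℝ) {α : Matrix (Fin N) (Fin N) ℝ} (hα : (cm α).PosDef) :
    Matrix (Fin N) (Fin N) ℂ :=
  ((-2 : ℂ) * Complex.I) • (Kp hα * cm θ * Kp hα)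

/-- `Ω = [[Ω_p, −iΦᵀ],[iΦ, 0]]`. -/
def Om (θ : Matrix (Fin N) (Fin N) ℝ) {α η : Matrix (Fin N) (Fin N) ℝ}
    (hα : (cm α).PosDef) (hη : (cm η).PosSemidef) :
    Matrix (Fin N ⊕ Fin N) (Fin N ⊕ Fin N) ℂ :=
  fromBlocks (Omp θ hα) ((-Complex.I) • (Phi hα hη)ᵀ) (Complex.I • Phi hα hη) 0

/-- `B = [[R̃, 0],[0, 0]]`. -/
def Bm (R : Matrix (Fin N) (Fin N) ℝ) {α : Matrix (Fin N) (Fin N) ℝ} (hα : (cm α).PosDef) :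
    Matrix (Fin N ⊕ Fin N) (Fin N ⊕ Fin N) ℂ :=
  fromBlocks (Rt R hα) 0 0 0

/-- The system operator `A(β) = Ω − iβB`. -/
def Asys (θ R : Matrix (Fin N) (Fin N) ℝ) {α η : Matrix (Fin N) (Fin N) ℝ}
    (hα : (cm α).PosDef) (hη : (cm η).PosSemidef) (β : ℝ) :
    Matrix (Fin N ⊕ Fin N) (Fin N ⊕ Fin N) ℂ :=
  Om θ hα hη - (Complex.I * (β : ℂ)) • Bm R hα

/-- The ℓ²→ℓ² operator norm of a complex matrix. -/
def opN {n : Type*} [Fintype n] [DecidableEq n] (M : Matrix n n ℂ) : ℝ :=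
  ‖Matrix.toEuclideanCLM (𝕜 := ℂ) M‖

/-- `ω_max = ‖Ω‖`. -/
def omegaMax (θ : Matrix (Fin N) (Fin N) ℝ) {α η : Matrix (Fin N) (Fin N) ℝ}
    (hα : (cm α).PosDef) (hη : (cm η).PosSemidef) : ℝ :=
  opN (Om θ hα hη)

/-- `b_min`, the smallest nonzero eigenvalue of `B`. -/
def bMin (R : Matrix (Fin N) (Fin N) ℝ) {α : Matrix (Fin N) (Fin N) ℝ} (hα : (cm α).PosDef) : ℝ :=
  sInf {r : ℝ | r ≠ 0 ∧ (r : ℂ) ∈ spectrum ℂ (Bm R hα)}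

/-! ### Auxiliary lemmas -/

section PsdSqrt

open scoped MatrixOrder

lemma psdSqrt_eq {A : Matrix (Fin N) (Fin N) ℂ} (h : A.PosSemidef) :
    psdSqrt h = CFC.sqrt A := by
  rw [CFC.sqrt_eq_real_sqrt A h.nonneg, cfcₙ_eq_cfc, h.1.cfc_eq]
  simp [IsHermitian.cfc, psdSqrt, Function.comp_def]

lemma psdSqrt_posSemidef {A : Matrix (Fin N) (Fin N) ℂ} (h : A.PosSemidef) :
    (psdSqrt h).PosSemidef := by
  rw [psdSqrt_eq]
  exact (CFC.sqrt_nonneg A).posSemidef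

lemma psdSqrt_sq {A : Matrix (Fin N) (Fin N) ℂ} (h : A.PosSemidef) :
    psdSqrt h ^ 2 = A := by
  rw [psdSqrt_eq, pow_two]
  exact CFC.sqrt_mul_sqrt_self A h.nonneg

lemma psdSqrt_unique {A X : Matrix (Fin N) (Fin N) ℂ} (h : A.PosSemidef)
    (hX : X.PosSemidef) (h2 : X ^ 2 = A) : X = psdSqrt h := by
  rw [psdSqrt_eq]
  rw [pow_two] at h2
  exact (CFC.sqrt_unique h2 hX.nonneg).symm

end PsdSqrt

section Aux

lemma exists_eigvec {n : Type*} [Fintype n] [DecidableEq n] {M : Matrix n n ℂ} {ζ : ℂ}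
    (h : ζ ∈ spectrum ℂ M) : ∃ x : n → ℂ, x ≠ 0 ∧ M *ᵥ x = ζ • x := by
  rw [spectrum.mem_iff, Matrix.isUnit_iff_isUnit_det, isUnit_iff_ne_zero, not_not] at h
  obtain ⟨x, hx0, hx⟩ := (Matrix.exists_mulVec_eq_zero_iff).mpr h
  refine ⟨x, hx0, ?_⟩
  rw [Matrix.sub_mulVec, sub_eq_zero, Algebra.algebraMap_eq_smul_one,
    Matrix.smul_mulVec, Matrix.one_mulVec] at hx
  exact hx.symm

lemma cm_transpose_of_herm {M : Matrix (Fin N) (Fin N) ℝ} (h : (cm M).IsHermitian) :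
    (cm M)ᵀ = cm M := by
  have h2 : (cm M)ᵀ = (cm M)ᴴ := by
    ext i j
    simp [cm, Matrix.conjTranspose_apply, Matrix.transpose_apply, Complex.conj_ofReal]
  rw [h2, h.eq]

lemma sqrt_transpose {M : Matrix (Fin N) (Fin N) ℝ} (h : (cm M).PosSemidef) :
    (psdSqrt h)ᵀ = psdSqrt h := by
  have h1 : ((psdSqrt h)ᵀ).PosSemidef := (psdSqrt_posSemidef h).transpose
  have h2 : (psdSqrt h)ᵀ ^ 2 = cm M := by
    rw [pow_two, ← Matrix.transpose_mul, ← pow_two, psdSqrt_sq h, cm_transpose_of_herm h.1]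
  exact psdSqrt_unique h h1 h2

lemma Kp_transpose {α : Matrix (Fin N) (Fin N) ℝ} (hα : (cm α).PosDef) : (Kp hα)ᵀ = Kp hα := by
  rw [Kp, Matrix.transpose_nonsing_inv, sqrt_transpose]

lemma Kp_conjTranspose {α : Matrix (Fin N) (Fin N) ℝ} (hα : (cm α).PosDef) :
    (Kp hα)ᴴ = Kp hα := by
  rw [Kp, Matrix.conjTranspose_nonsing_inv, (psdSqrt_posSemidef hα.posSemidef).1.eq]

lemma Phi_transpose_eq {α η : Matrix (Fin N) (Fin N) ℝ} (hα : (cm α).PosDef)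
    (hη : (cm η).PosSemidef) : (Phi hα hη)ᵀ = (Phi hα hη)ᴴ := by
  rw [Phi, Matrix.transpose_mul, Matrix.conjTranspose_mul, Kp_transpose, Kp_conjTranspose,
    sqrt_transpose, (psdSqrt_posSemidef hη).1.eq]

lemma Rt_posSemidef {R α : Matrix (Fin N) (Fin N) ℝ} (hR : (cm R).PosSemidef)
    (hα : (cm α).PosDef) : (Rt R hα).PosSemidef := by
  rw [Rt]
  nth_rewrite 1 [← Kp_conjTranspose hα]
  exact hR.conjTranspose_mul_mul_same _

lemma dot_star_self_eq {n : Type*} [Fintype n] (u : n → ℂ) :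
    star u ⬝ᵥ u = ((∑ i, Complex.normSq (u i) : ℝ) : ℂ) := by
  push_cast
  simp [dotProduct, Complex.normSq_eq_conj_mul_self]

lemma sum_normSq_pos {n : Type*} [Fintype n] {u : n → ℂ} (hu : u ≠ 0) :
    0 < ∑ i, Complex.normSq (u i) := by
  obtain ⟨i, hi⟩ := Function.ne_iff.mp hu
  exact Finset.sum_pos' (fun j _ => Complex.normSq_nonneg _)
    ⟨i, Finset.mem_univ i, Complex.normSq_pos.mpr hi⟩

end Aux

lemma specA_key {α η R : Matrix (Fin N) (Fin N) ℝ} (hα : (cm α).PosDef)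
    (hη : (cm η).PosSemidef) (hR : (cm R).PosSemidef) (β : ℝ) {ζ : ℂ}
    (hζ : ζ ∈ spectrum ℂ (Asys 0 R hα hη β)) :
    ζ.re = 0 ∨ ζ.re ^ 2 + ζ.im ^ 2 ≤ (omegaMax 0 hα hη) ^ 2 := by
  by_cases hζ0 : ζ = 0
  · left; simp [hζ0]
  obtain ⟨x, hx0, hx⟩ := exists_eigvec hζ
  set Φ : Matrix (Fin N) (Fin N) ℂ := Phi hα hη with hΦdef
  set u : Fin N → ℂ := x ∘ Sum.inl with hudef
  set v : Fin N → ℂ := x ∘ Sum.inr with hvdef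
  have hOmp : Omp (0 : Matrix (Fin N) (Fin N) ℝ) hα = 0 := by
    have h0 : cm (0 : Matrix (Fin N) (Fin N) ℝ) = 0 := by ext i j; simp [cm]
    simp [Omp, h0]
  have hOm : Om 0 hα hη = fromBlocks 0 ((-Complex.I) • Φᵀ) (Complex.I • Φ) 0 := by
    rw [Om, hOmp]
  have hx' : Om 0 hα hη *ᵥ x - (Complex.I * β) • (Bm R hα *ᵥ x) = ζ • x := by
    rw [← Matrix.smul_mulVec, ← Matrix.sub_mulVec]; exact hx
  rw [hOm, Bm, Matrix.fromBlocks_mulVec, Matrix.fromBlocks_mulVec, ← hudef, ← hvdef] at hx'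
  have E1 : (-Complex.I) • (Φᵀ *ᵥ v) - (Complex.I * β) • (Rt R hα *ᵥ u) = ζ • u := by
    funext i
    have h := congrFun hx' (Sum.inl i)
    simpa [Matrix.smul_mulVec, Matrix.zero_mulVec, Matrix.neg_mulVec, neg_smul, hudef, hvdef] using h
  have E2 : Complex.I • (Φ *ᵥ u) = ζ • v := by
    funext i
    have h := congrFun hx' (Sum.inr i)
    simpa [Matrix.smul_mulVec, Matrix.zero_mulVec, Matrix.neg_mulVec, neg_smul, hudef, hvdef] using h
  have hu0 : u ≠ 0 := by
    intro h
    apply hx0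
    have hv : v = 0 := by
      have h2 := E2
      rw [h] at h2
      simp only [Matrix.mulVec_zero, smul_zero] at h2
      rcases smul_eq_zero.mp h2.symm with h3 | h3
      · exact absurd h3 hζ0
      · exact h3
    funext i
    cases i with
    | inl i => exact congrFun h i
    | inr i => exact congrFun hv i
  -- scalar quantities
  set w : Fin N → ℂ := Φ *ᵥ u with hwdef
  set n' : ℂ := star u ⬝ᵥ u with hn'def
  set r' : ℂ := star u ⬝ᵥ (Rt R hα *ᵥ u) with hr'def
  set s' : ℂ := star w ⬝ᵥ w with hs'def
  set t' : ℂ := star u ⬝ᵥ (Φᵀ *ᵥ v) with ht'def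
  have eq1 : (-Complex.I) * t' - (Complex.I * β) * r' = ζ * n' := by
    have h := congrArg (fun y => star u ⬝ᵥ y) E1
    simpa [dotProduct_sub, dotProduct_smul, smul_eq_mul] using h
  have hts : ζ * t' = Complex.I * s' := by
    have h1 : ζ * t' = star u ⬝ᵥ (Φᵀ *ᵥ (ζ • v)) := by
      rw [Matrix.mulVec_smul, dotProduct_smul, smul_eq_mul]
    rw [h1, ← E2, Matrix.mulVec_smul, dotProduct_smul, smul_eq_mul]
    congr 1
    rw [Phi_transpose_eq hα hη, Matrix.dotProduct_mulVec, ← Matrix.star_mulVec]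
  have key : ζ ^ 2 * n' + (Complex.I * β * ζ) * r' = s' := by
    linear_combination (-ζ) * eq1 - Complex.I * hts - s' * Complex.I_mul_I
  -- realness and positivity
  have hr0 : 0 ≤ r' := (Rt_posSemidef hR hα).dotProduct_mulVec_nonneg u
  rw [Complex.le_def] at hr0
  have hrr : r' = ((r'.re : ℝ) : ℂ) := by
    apply Complex.ext <;> simp [hr0.2.symm]
  set rr : ℝ := r'.re with hrrdef
  have hrr0 : 0 ≤ rr := by simpa using hr0.1
  set nu : ℝ := ∑ i, Complex.normSq (u i) with hnudef
  set ns : ℝ := ∑ i, Complex.normSq (w i) with hnsdef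
  have hn : n' = (nu : ℂ) := dot_star_self_eq u
  have hs : s' = (ns : ℂ) := dot_star_self_eq w
  have hnu : 0 < nu := sum_normSq_pos hu0
  have hns0 : 0 ≤ ns := Finset.sum_nonneg fun i _ => Complex.normSq_nonneg _
  have hω0 : 0 ≤ omegaMax 0 hα hη := norm_nonneg _
  -- norm bound : ns ≤ ω² nu
  have hbound : ns ≤ (omegaMax 0 hα hη) ^ 2 * nu := by
    have happ : (Matrix.toEuclideanCLM (𝕜 := ℂ) (Om 0 hα hη))
        ((WithLp.equiv 2 _).symm (Sum.elim u 0)) =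
        (WithLp.equiv 2 _).symm (Sum.elim (0 : Fin N → ℂ) (Complex.I • w)) := by
      change (WithLp.equiv 2 _).symm (Matrix.toLin' (Om 0 hα hη) (Sum.elim u 0)) = _
      congr 1
      rw [Matrix.toLin'_apply, hOm, Matrix.fromBlocks_mulVec]
      funext i
      cases i with
      | inl i => simp [Matrix.zero_mulVec, Matrix.smul_mulVec, Matrix.mulVec_zero]
      | inr i => simp [Matrix.zero_mulVec, Matrix.smul_mulVec, Matrix.mulVec_zero, hwdef]
    have hle := (Matrix.toEuclideanCLM (𝕜 := ℂ) (Om 0 hα hη)).le_opNorm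
      ((WithLp.equiv 2 _).symm (Sum.elim u 0))
    rw [happ] at hle
    have h1 : ‖(WithLp.equiv 2 ((Fin N ⊕ Fin N) → ℂ)).symm (Sum.elim u 0)‖ = Real.sqrt nu := by
      rw [EuclideanSpace.norm_eq]
      congr 1
      simp [Fintype.sum_sum_type, Complex.sq_norm, hnudef]
    have h2 : ‖(WithLp.equiv 2 ((Fin N ⊕ Fin N) → ℂ)).symm
        (Sum.elim (0 : Fin N → ℂ) (Complex.I • w))‖ = Real.sqrt ns := by
      rw [EuclideanSpace.norm_eq]
      congr 1
      simp [Fintype.sum_sum_type, Complex.sq_norm, mul_pow, hnsdef]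
    rw [h1, h2] at hle
    have hle2 : Real.sqrt ns * Real.sqrt ns ≤
        (omegaMax 0 hα hη * Real.sqrt nu) * (omegaMax 0 hα hη * Real.sqrt nu) := by
      have homega : omegaMax 0 hα hη = ‖Matrix.toEuclideanCLM (𝕜 := ℂ) (Om 0 hα hη)‖ := rfl
      rw [homega]
      exact mul_le_mul hle hle (Real.sqrt_nonneg _) (by positivity)
    nlinarith [Real.sq_sqrt hns0, Real.sq_sqrt hnu.le, Real.sqrt_nonneg nu, Real.sqrt_nonneg ns]
  -- real and imaginary parts
  rw [hn, hs, hrr] at key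
  have kim := congrArg Complex.im key
  have kre := congrArg Complex.re key
  simp only [Complex.add_re, Complex.add_im, Complex.mul_re, Complex.mul_im,
    Complex.ofReal_re, Complex.ofReal_im, Complex.I_re, Complex.I_im, pow_two,
    mul_zero, zero_mul, mul_one, one_mul, sub_zero, zero_sub, add_zero, zero_add,
    neg_zero, neg_neg, mul_neg, neg_mul] at kre kim
  have him : ζ.re * (2 * ζ.im * nu + β * rr) = 0 := by linear_combination kim
  rcases mul_eq_zero.mp him with h | h
  · left; exact h
  · right
    have hsum : (ζ.re ^ 2 + ζ.im ^ 2) * nu = ns := by linear_combination kre + ζ.im * h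
    nlinarith [hbound, hsum, hnu]

lemma Bm_eig_pos {α R : Matrix (Fin N) (Fin N) ℝ} (hα : (cm α).PosDef)
    (hR : (cm R).PosSemidef) {b : ℝ} (hb0 : b ≠ 0)
    (hb : (b : ℂ) ∈ spectrum ℂ (Bm R hα)) : 0 < b := by
  obtain ⟨y, hy0, hy⟩ := exists_eigvec hb
  set p : Fin N → ℂ := y ∘ Sum.inl with hpdef
  set q : Fin N → ℂ := y ∘ Sum.inr with hqdef
  rw [Bm, Matrix.fromBlocks_mulVec, ← hpdef, ← hqdef] at hy
  have hq : q = 0 := by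
    funext i
    have h := congrFun hy (Sum.inr i)
    simp only [Sum.elim_inr, Matrix.zero_mulVec, Pi.add_apply, Pi.zero_apply, add_zero,
      Pi.smul_apply, smul_eq_mul, zero_add] at h
    have hbne : (b : ℂ) ≠ 0 := by exact_mod_cast hb0
    have := h.symm
    rcases mul_eq_zero.mp this with h2 | h2
    · exact absurd h2 hbne
    · exact h2
  have hp1 : Rt R hα *ᵥ p = (b : ℂ) • p := by
    funext i
    have h := congrFun hy (Sum.inl i)
    simpa [hpdef] using h
  have hp0 : p ≠ 0 := by
    intro h
    apply hy0
    funext i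
    cases i with
    | inl i => exact congrFun h i
    | inr i => exact congrFun hq i
  have h2 := (Rt_posSemidef hR hα).dotProduct_mulVec_nonneg p
  rw [hp1, dotProduct_smul, dot_star_self_eq, smul_eq_mul] at h2
  set nu : ℝ := ∑ i, Complex.normSq (p i) with hnudef
  have hnu : 0 < nu := sum_normSq_pos hp0
  have h3 : 0 ≤ ((b * nu : ℝ) : ℂ) := by push_cast; exact h2
  rw [Complex.zero_le_real] at h3
  have hb' : 0 ≤ b := by nlinarith [h3, hnu]
  exact lt_of_le_of_ne hb' (Ne.symm hb0)

theorem partial_overdamping'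
    {N : ℕ} (hN : 1 ≤ N)
    (α η R : Matrix (Fin N) (Fin N) ℝ)
    (hα : (cm α).PosDef) (hη : (cm η).PosSemidef)
    (hR : (cm R).PosSemidef) (hR0 : R ≠ 0) (hrank : R.rank < N)
    (β : ℝ) (hβ : 2 * omegaMax 0 hα hη / bMin R hα < β) :
    (∀ ζ ∈ spectrum ℂ (Asys 0 R hα hη β),
      (∃ b : ℝ, b ≠ 0 ∧ (b : ℂ) ∈ spectrum ℂ (Bm R hα) ∧
        ‖ζ + Complex.I * (β : ℂ) * (b : ℂ)‖ ≤ omegaMax 0 hα hη) →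
      ζ.re = 0) ∧
    (∀ ζ ∈ spectrum ℂ (Asys 0 R hα hη β), omegaMax 0 hα hη < -ζ.im → ζ.re = 0) := by
  have hω0 : 0 ≤ omegaMax 0 hα hη := norm_nonneg _
  constructor
  · rintro ζ hζ ⟨b, hb0, hbspec, hdisc⟩
    have hbpos : 0 < b := Bm_eig_pos hα hR hb0 hbspec
    set S : Set ℝ := {r : ℝ | r ≠ 0 ∧ (r : ℂ) ∈ spectrum ℂ (Bm R hα)} with hSdef
    have hSsub : S ⊆ (fun r : ℝ => (r : ℂ)) ⁻¹' (spectrum ℂ (Bm R hα)) := fun r hr => hr.2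
    have hSfin : S.Finite :=
      Set.Finite.subset (Set.Finite.preimage (Complex.ofReal_injective.injOn)
        (Matrix.finite_spectrum _)) hSsub
    have hSb : b ∈ S := ⟨hb0, hbspec⟩
    have hmin_mem : bMin R hα ∈ S := Set.Nonempty.csInf_mem ⟨b, hSb⟩ hSfin
    have hminpos : 0 < bMin R hα := Bm_eig_pos hα hR hmin_mem.1 hmin_mem.2
    have hble : bMin R hα ≤ b := csInf_le hSfin.bddBelow hSb
    have hβpos : 0 < β := lt_of_le_of_lt (by positivity) hβ
    have hβb : 2 * omegaMax 0 hα hη < β * b := by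
      have h1 : 2 * omegaMax 0 hα hη = (2 * omegaMax 0 hα hη / bMin R hα) * bMin R hα := by
        field_simp
      calc 2 * omegaMax 0 hα hη = (2 * omegaMax 0 hα hη / bMin R hα) * bMin R hα := h1
        _ < β * bMin R hα := by exact mul_lt_mul_of_pos_right hβ hminpos
        _ ≤ β * b := by exact mul_le_mul_of_nonneg_left hble hβpos.le
    rcases specA_key hα hη hR β hζ with h | h
    · exact h
    · exfalso
      have habs : (ζ.re) ^ 2 + (ζ.im + β * b) ^ 2 ≤ (omegaMax 0 hα hη) ^ 2 := by
        have h1 := pow_le_pow_left₀ (norm_nonneg _) hdisc 2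
        rw [Complex.sq_norm, Complex.normSq_apply] at h1
        have hre : (ζ + Complex.I * (β : ℂ) * (b : ℂ)).re = ζ.re := by simp
        have him : (ζ + Complex.I * (β : ℂ) * (b : ℂ)).im = ζ.im + β * b := by simp
        rw [hre, him] at h1
        nlinarith [h1]
      nlinarith [h, habs, hβb, hω0, sq_nonneg (2 * ζ.im + β * b), sq_nonneg ζ.re]
  · intro ζ hζ him
    rcases specA_key hα hη hR β hζ with h | h
    · exact h
    · exfalso
      nlinarith [h, him, hω0, sq_nonneg ζ.re]

/-- **Partial overdamping of the high-loss spectrum** (`θ = 0`, `rank R < N`). If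
`β > 2 ω_max / b_min`, then every `ζ ∈ σ(A(β))` lying in a high-loss disc
(`|ζ + iβb| ≤ ω_max` for some nonzero eigenvalue `b` of `B`) satisfies `Re ζ = 0`;
equivalently, every `ζ ∈ σ(A(β))` with `−Im ζ > ω_max` satisfies `Re ζ = 0`. -/
theorem partial_overdamping
    {N : ℕ} (hN : 1 ≤ N)
    (α η R : Matrix (Fin N) (Fin N) ℝ)
    (hα : (cm α).PosDef) (hη : (cm η).PosSemidef)
    (hR : (cm R).PosSemidef) (hR0 : R ≠ 0) (hrank : R.rank < N)
    (β : ℝ) (hβ : 2 * omegaMax 0 hα hη / bMin R hα < β) :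
    (∀ ζ ∈ spectrum ℂ (Asys 0 R hα hη β),
      (∃ b : ℝ, b ≠ 0 ∧ (b : ℂ) ∈ spectrum ℂ (Bm R hα) ∧
        ‖ζ + Complex.I * (β : ℂ) * (b : ℂ)‖ ≤ omegaMax 0 hα hη) →
      ζ.re = 0) ∧
    (∀ ζ ∈ spectrum ℂ (Asys 0 R hα hη β), omegaMax 0 hα hη < -ζ.im → ζ.re = 0) := 
  partial_overdamping' hN α η R hα hη hR hR0 hrank β hβ
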